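/- Suppose ‖T(t,s)‖ ≤ Me^{λ̄|t−s|+ε|s|} for all t,s, and f satisfies (F3) (with η ≤ 1) and (F4). Define f_n(x) := φ(n+1,n;x) − T(n+1,n)x. Then there exists a constant B̃ > 0 such that ‖Df_n(x) − Df_n(y)‖ ≤ B̃e^{−ε|n|}‖x−y‖ for every n ∈ ℤ and all x,y ∈ ℝ^d. -/

import Mathlib

/- STATEMENT 15: A Lipschitz bound for the derivative of the discretized
perturbation f_n(x) = φ(n+1,n;x) − T(n+1,n)x: there is B̃ > 0 with
‖Df_n(x) − Df_n(y)‖ ≤ B̃ e^{−ε|n|} ‖x−y‖. -/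

noncomputable section

/-- `ℝ^d` -/
abbrev Ed (d : ℕ) := Fin d → ℝ

open Set MeasureTheory Filter

section Helpers

variable {F G : Type*} [NormedAddCommGroup F] [NormedSpace ℝ F]
  [NormedAddCommGroup G] [NormedSpace ℝ G]

lemma IntervalIntegrable.clm_comp' {f : ℝ → F} {a b : ℝ} (L : F →L[ℝ] G)
    (hf : IntervalIntegrable f MeasureTheory.volume a b) :
    IntervalIntegrable (fun s => L (f s)) MeasureTheory.volume a b :=
  ⟨L.integrable_comp hf.1, L.integrable_comp hf.2⟩

lemma primitive_hasDerivWithinAt' {g : ℝ → ℝ} {a b t : ℝ}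
    (hg : ContinuousOn g (Set.Icc a b)) (ht : t ∈ Set.Ico a b) (hat : a ≤ t) :
    HasDerivWithinAt (fun u => ∫ s in a..u, g s) (g t) (Set.Ici t) t := by
  have htb : t < b := ht.2
  have hint : IntervalIntegrable g MeasureTheory.volume a t := by
    apply ContinuousOn.intervalIntegrable
    rw [Set.uIcc_of_le hat]
    exact hg.mono (Set.Icc_subset_Icc le_rfl htb.le)
  have hIccmem : Set.Icc t b ∈ nhdsWithin t (Set.Ici t) :=
    Icc_mem_nhdsGE_of_mem ⟨le_rfl, htb⟩
  have hIoimem : Set.Icc t b ∈ nhdsWithin t (Set.Ioi t) :=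
    nhdsWithin_mono t Set.Ioi_subset_Ici_self hIccmem
  have hmeas : StronglyMeasurableAtFilter g (nhdsWithin t (Set.Ioi t)) MeasureTheory.volume :=
    ⟨Set.Icc t b, hIoimem,
      (hg.mono (Set.Icc_subset_Icc ht.1 le_rfl)).aestronglyMeasurable measurableSet_Icc⟩
  have hcont : ContinuousWithinAt g (Set.Ioi t) t := by
    have h1 : ContinuousWithinAt g (Set.Icc a b) t := hg t ⟨ht.1, htb.le⟩
    exact h1.mono_of_mem_nhdsWithin
      (Filter.mem_of_superset hIoimem (Set.Icc_subset_Icc ht.1 le_rfl))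
  exact intervalIntegral.integral_hasDerivWithinAt_right hint hmeas hcont

lemma gronwall_int' {g : ℝ → ℝ} {a b δ K : ℝ} (hab : a ≤ b)
    (hg : ContinuousOn g (Set.Icc a b)) (hg0 : ∀ t ∈ Set.Icc a b, 0 ≤ g t)
    (hK : 0 < K) (hδ : 0 ≤ δ)
    (hle : ∀ t ∈ Set.Icc a b, g t ≤ δ + K * ∫ s in a..t, g s) :
    ∀ t ∈ Set.Icc a b, g t ≤ δ * Real.exp (K * (t - a)) := by
  set v : ℝ → ℝ := fun u => ∫ s in a..u, g s with hv
  have hgint : IntervalIntegrable g MeasureTheory.volume a b :=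
    (by rwa [Set.uIcc_of_le hab] : ContinuousOn g (Set.uIcc a b)).intervalIntegrable
  have hvcont : ContinuousOn v (Set.Icc a b) := by
    have := intervalIntegral.continuousOn_primitive_interval' hgint Set.left_mem_uIcc
    rwa [Set.uIcc_of_le hab] at this
  have hvd : ∀ t ∈ Set.Ico a b, HasDerivWithinAt v (g t) (Set.Ici t) t :=
    fun t ht => primitive_hasDerivWithinAt' hg ht ht.1
  have hvnn : ∀ t ∈ Set.Icc a b, 0 ≤ v t := by
    intro t ht
    apply intervalIntegral.integral_nonneg ht.1
    intro s hs; exact hg0 s ⟨hs.1, hs.2.trans ht.2⟩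
  have hres : ∀ t ∈ Set.Icc a b, ‖v t‖ ≤ gronwallBound 0 K δ (t - a) := by
    apply norm_le_gronwallBound_of_norm_deriv_right_le hvcont hvd
    · simp [hv]
    · intro t ht
      have htm : t ∈ Set.Icc a b := ⟨ht.1, ht.2.le⟩
      rw [Real.norm_eq_abs, abs_of_nonneg (hg0 t htm), Real.norm_eq_abs,
        abs_of_nonneg (hvnn t htm)]
      linarith [hle t htm]
  intro t ht
  have h2 := hres t ht
  rw [Real.norm_eq_abs, abs_of_nonneg (hvnn t ht), gronwallBound_of_K_ne_0 hK.ne'] at h2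
  have h3 : g t ≤ δ + K * (0 * Real.exp (K * (t - a)) + δ / K * (Real.exp (K * (t - a)) - 1)) := by
    refine (hle t ht).trans ?_
    have := mul_le_mul_of_nonneg_left h2 hK.le
    linarith
  refine h3.trans (le_of_eq ?_)
  field_simp
  ring

lemma measurable_clm_of_apply' {d : ℕ} {u : ℝ → ((Fin d → ℝ) →L[ℝ] (Fin d → ℝ))}
    (h : ∀ v, Measurable fun t => u t v) : Measurable u := by
  let e : ((Fin d → ℝ) →L[ℝ] (Fin d → ℝ)) ≃L[ℝ] (Fin d → (Fin d → ℝ)) :=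
    ContinuousLinearEquiv.piRing (Fin d)
  have h1 : Measurable fun t => e (u t) := by
    apply measurable_pi_lambda
    intro i
    have he : (fun t => e (u t) i) = fun t => u t (Pi.single i 1) := rfl
    rw [he]; exact h _
  have h2 : u = fun t => e.symm (e (u t)) := by funext t; simp
  rw [h2]
  exact e.symm.continuous.measurable.comp h1

end Helpers


theorem discretized_perturbation_derivative_lipschitz (d : ℕ)
    -- the linear equation x' = A(t)x and its evolution family T(t,s)
    (A : ℝ → Ed d →L[ℝ] Ed d) (T : ℝ → ℝ → Ed d →L[ℝ] Ed d)
    (hT_id : ∀ t, T t t = ContinuousLinearMap.id ℝ (Ed d))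
    (hT_comp : ∀ t s r, (T t s).comp (T s r) = T t r)
    (hT_deriv : ∀ s x t, HasDerivAt (fun τ => T τ s x) (A t (T t s x)) t)
    (M lamBar eps η : ℝ) (hM : 0 < M) (hlamBar : 0 < lamBar) (heps : 0 ≤ eps)
    (hη : 0 < η) (hη1 : η ≤ 1)
    (hgrowth : ∀ t s, ‖T t s‖ ≤ M * Real.exp (lamBar * |t - s| + eps * |s|))
    -- the perturbation f, continuous, C¹ in x with jointly continuous derivative
    (f : ℝ → Ed d → Ed d) (Df : ℝ → Ed d → (Ed d →L[ℝ] Ed d))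
    (hf_cont : Continuous (fun p : ℝ × Ed d => f p.1 p.2))
    (hf_diff : ∀ t x, HasFDerivAt (f t) (Df t x) x)
    (hDf_cont : Continuous (fun p : ℝ × Ed d => Df p.1 p.2))
    -- (F3) and (F4)
    (B : ℝ) (hB : 0 < B)
    (hF3 : ∀ t x, ‖Df t x‖ ≤ η * Real.exp (-3 * eps * |t|))
    (hF4 : ∀ t x y, ‖Df t x - Df t y‖ ≤ B * Real.exp (-4 * eps * |t|) * ‖x - y‖)
    -- φ(t,t₀;x): the globally defined solution of x' = A(t)x + f(t,x), C¹ in x,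
    -- satisfying the variation-of-parameters formula
    (φ : ℝ → ℝ → Ed d → Ed d) (Dφ : ℝ → ℝ → Ed d → (Ed d →L[ℝ] Ed d))
    (hφ_init : ∀ t₀ x, φ t₀ t₀ x = x)
    (hφ_sol : ∀ t₀ x t, HasDerivAt (fun τ => φ τ t₀ x) (A t (φ t t₀ x) + f t (φ t t₀ x)) t)
    (hφ_diff : ∀ t t₀ x, HasFDerivAt (φ t t₀) (Dφ t t₀ x) x)
    (hDvop : ∀ t t₀ x, Dφ t t₀ x =
      T t t₀ + ∫ s in t₀..t, (T t s).comp ((Df s (φ s t₀ x)).comp (Dφ s t₀ x))) :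
    -- then there is B̃ > 0 with ‖Df_n(x) − Df_n(y)‖ ≤ B̃ e^{−ε|n|} ‖x−y‖, where
    -- Df_n(x) = D_xφ(n+1,n;x) − T(n+1,n) so that Df_n(x) − Df_n(y) is the
    -- difference of the derivatives of the solution map
    ∃ Bt : ℝ, 0 < Bt ∧
      ∀ (n : ℤ) (x y : Ed d),
        ‖Dφ ((n : ℝ) + 1) (n : ℝ) x - Dφ ((n : ℝ) + 1) (n : ℝ) y‖ ≤
          Bt * Real.exp (-eps * |(n : ℝ)|) * ‖x - y‖ := by
  classical
  set CT := M * Real.exp (lamBar + eps) with hCT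
  have hCT0 : 0 < CT := mul_pos hM (Real.exp_pos _)
  set K1 := CT * η * Real.exp (3 * eps) with hK1
  have hK10 : 0 < K1 := mul_pos (mul_pos hCT0 hη) (Real.exp_pos _)
  refine ⟨B * CT ^ 3 * Real.exp (4 * eps + 3 * K1),
    mul_pos (mul_pos hB (pow_pos hCT0 3)) (Real.exp_pos _), ?_⟩
  intro n x y
  set a : ℝ := (n : ℝ) with ha
  set b : ℝ := a + 1 with hb
  have hab : a ≤ b := by rw [hb]; linarith
  -- basic interval estimates
  have hsub1 : ∀ s ∈ Set.Icc a b, |s - a| ≤ 1 := by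
    intro s hs
    have h2 := hs.2; rw [hb] at h2
    rw [abs_le]; constructor
    · linarith [hs.1]
    · linarith
  have habs_le : ∀ s ∈ Set.Icc a b, |s| ≤ |a| + 1 := by
    intro s hs
    calc |s| = |a + (s - a)| := by ring_nf
      _ ≤ |a| + |s - a| := abs_add_le _ _
      _ ≤ |a| + 1 := by linarith [hsub1 s hs]
  have habs_ge : ∀ s ∈ Set.Icc a b, |a| - 1 ≤ |s| := by
    intro s hs
    have h1 : |a| ≤ |s| + |s - a| := by
      calc |a| = |s - (s - a)| := by ring_nf
        _ ≤ |s| + |s - a| := abs_sub _ _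
    linarith [hsub1 s hs]
  have hTle : ∀ t ∈ Set.Icc a b, ∀ s ∈ Set.Icc a b,
      ‖T t s‖ ≤ CT * Real.exp (eps * |a|) := by
    intro t ht s hs
    refine (hgrowth t s).trans ?_
    have hts : |t - s| ≤ 1 := by
      have h1 := ht.1; have h2 := ht.2; have h3 := hs.1; have h4 := hs.2
      rw [hb] at h2 h4
      rw [abs_le]; constructor <;> linarith
    have hsum : lamBar * |t - s| + eps * |s| ≤ lamBar + (eps + eps * |a|) := by
      have h5 := habs_le s hs
      have h6 : lamBar * |t - s| ≤ lamBar * 1 := mul_le_mul_of_nonneg_left hts hlamBar.le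
      have h7 : eps * |s| ≤ eps * (|a| + 1) := mul_le_mul_of_nonneg_left h5 heps
      have h8 : lamBar * 1 = lamBar := mul_one _
      nlinarith [h6, h7]
    calc M * Real.exp (lamBar * |t - s| + eps * |s|)
        ≤ M * Real.exp (lamBar + (eps + eps * |a|)) :=
          mul_le_mul_of_nonneg_left (Real.exp_le_exp.2 hsum) hM.le
      _ = CT * Real.exp (eps * |a|) := by
          rw [hCT, mul_assoc, ← Real.exp_add]; ring_nf
  have hexp1 : Real.exp (eps * |a|) * Real.exp (-(3 * eps) * |a|) ≤ 1 := by
    rw [← Real.exp_add, ← Real.exp_zero]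
    apply Real.exp_le_exp.2
    have h0 := mul_nonneg heps (abs_nonneg a)
    linarith
  have hexp3 : ∀ s ∈ Set.Icc a b,
      Real.exp (-3 * eps * |s|) ≤ Real.exp (3 * eps) * Real.exp (-(3 * eps) * |a|) := by
    intro s hs
    rw [← Real.exp_add]
    apply Real.exp_le_exp.2
    have h0 := habs_ge s hs
    have h9 : 3 * eps * (|a| - 1) ≤ 3 * eps * |s| :=
      mul_le_mul_of_nonneg_left h0 (by linarith)
    linarith
  have hexp4 : ∀ s ∈ Set.Icc a b,
      Real.exp (-4 * eps * |s|) ≤ Real.exp (4 * eps) * Real.exp (-(4 * eps) * |a|) := by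
    intro s hs
    rw [← Real.exp_add]
    apply Real.exp_le_exp.2
    have h0 := habs_ge s hs
    have h9 : 4 * eps * (|a| - 1) ≤ 4 * eps * |s| :=
      mul_le_mul_of_nonneg_left h0 (by linarith)
    linarith
  have hKcoef : CT * Real.exp (eps * |a|) *
      (η * (Real.exp (3 * eps) * Real.exp (-(3 * eps) * |a|))) ≤ K1 := by
    have h1 : CT * Real.exp (eps * |a|) * (η * (Real.exp (3 * eps) * Real.exp (-(3 * eps) * |a|)))
        = CT * η * Real.exp (3 * eps) * (Real.exp (eps * |a|) * Real.exp (-(3 * eps) * |a|)) := by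
      ring
    rw [h1, hK1]
    exact mul_le_of_le_one_right
      (by positivity) hexp1
  -- continuity facts
  have contφt : ∀ z, Continuous fun τ => φ τ a z := fun z =>
    Differentiable.continuous (fun τ => (hφ_sol a z τ).differentiableAt)
  have contT : ∀ s : ℝ, Continuous fun t => T t s := by
    intro s
    rw [continuous_clm_apply]
    intro v
    exact Differentiable.continuous (fun τ => (hT_deriv s v τ).differentiableAt)
  have Tunit : ∀ s : ℝ, ∃ u : (Ed d →L[ℝ] Ed d)ˣ, (u : Ed d →L[ℝ] Ed d) = T s a ∧
      ((u⁻¹ : (Ed d →L[ℝ] Ed d)ˣ) : Ed d →L[ℝ] Ed d) = T a s := by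
    intro s
    refine ⟨⟨T s a, T a s, ?_, ?_⟩, rfl, rfl⟩
    · rw [ContinuousLinearMap.mul_def, hT_comp s a s, hT_id s, ContinuousLinearMap.one_def]
    · rw [ContinuousLinearMap.mul_def, hT_comp a s a, hT_id a, ContinuousLinearMap.one_def]
  have contTa : Continuous fun s => T a s := by
    have hfun : (fun s => T a s) = fun s => Ring.inverse (T s a) := by
      funext s
      obtain ⟨u, hu1, hu2⟩ := Tunit s
      rw [← hu1, Ring.inverse_unit, hu2]
    rw [hfun]
    refine continuous_iff_continuousAt.2 fun s => ?_
    obtain ⟨u, hu1, hu2⟩ := Tunit s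
    have h1 : ContinuousAt Ring.inverse (T s a) := by
      rw [← hu1]; exact NormedRing.inverse_continuousAt u
    have h2 : ContinuousAt (fun t => T t a) s := (contT a).continuousAt
    have h3 : ContinuousAt (Ring.inverse ∘ fun t => T t a) s := ContinuousAt.comp h1 h2
    exact h3
  -- measurability of s ↦ Dφ s a z
  have measDφ : ∀ z, Measurable fun s => Dφ s a z := by
    intro z
    apply measurable_clm_of_apply'
    intro v
    apply measurable_of_tendsto_metrizable
      (f := fun (m : ℕ) (s : ℝ) => ((m : ℝ) + 1) • (φ s a (z + ((m : ℝ) + 1)⁻¹ • v) - φ s a z))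
    · intro m
      exact (((contφt (z + ((m : ℝ) + 1)⁻¹ • v)).sub (contφt z)).const_smul ((m : ℝ) + 1)).measurable
    · rw [tendsto_pi_nhds]
      intro s
      have hc : HasDerivAt (fun h : ℝ => z + h • v) v 0 := by
        simpa using ((hasDerivAt_id (0 : ℝ)).smul_const v).const_add z
      have hl : HasFDerivAt (φ s a) (Dφ s a z) ((fun h : ℝ => z + h • v) 0) := by
        simpa using hφ_diff s a z
      have hd : HasDerivAt (fun h : ℝ => φ s a (z + h • v)) (Dφ s a z v) 0 :=
        hl.comp_hasDerivAt 0 hc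
      have hslope := hasDerivAt_iff_tendsto_slope.1 hd
      have hseq : Tendsto (fun m : ℕ => ((m : ℝ) + 1)⁻¹) atTop
          (nhdsWithin 0 {(0 : ℝ)}ᶜ) := by
        apply tendsto_nhdsWithin_of_tendsto_nhds_of_eventually_within
        · simpa [one_div] using tendsto_one_div_add_atTop_nhds_zero_nat (𝕜 := ℝ)
        · refine Filter.Eventually.of_forall fun m => ?_
          simp only [Set.mem_compl_iff, Set.mem_singleton_iff]
          exact inv_ne_zero (by positivity)
      have hcomp := hslope.comp hseq
      refine hcomp.congr fun m => ?_
      show slope (fun h : ℝ => φ s a (z + h • v)) 0 (((m : ℝ) + 1)⁻¹) = _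
      rw [slope_def_module]
      simp [inv_inv]
  -- the integrands
  set G : Ed d → ℝ → (Ed d →L[ℝ] Ed d) :=
    fun z s => (Df s (φ s a z)).comp (Dφ s a z) with hG
  set H : Ed d → ℝ → (Ed d →L[ℝ] Ed d) := fun z s => (T a s).comp (G z s) with hH
  have hDvop' : ∀ z r, Dφ r a z = T r a + ∫ s in a..r, (T r s).comp (G z s) :=
    fun z r => hDvop r a z
  have hTH : ∀ (z : Ed d) (r s : ℝ), (T r a).comp (H z s) = (T r s).comp (G z s) := by
    intro z r s
    show (T r a).comp ((T a s).comp (G z s)) = _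
    rw [← ContinuousLinearMap.comp_assoc, hT_comp]
  have hGint : ∀ z r, IntervalIntegrable (H z) MeasureTheory.volume a r →
      IntervalIntegrable (fun s => (T r s).comp (G z s)) MeasureTheory.volume a r := by
    intro z r hint
    have h1 := hint.clm_comp' (ContinuousLinearMap.compL ℝ (Ed d) (Ed d) (Ed d) (T r a))
    have he : (fun s => (T r s).comp (G z s))
        = fun s => (ContinuousLinearMap.compL ℝ (Ed d) (Ed d) (Ed d) (T r a)) (H z s) := by
      funext s
      rw [ContinuousLinearMap.compL_apply, hTH]
    rw [he]
    exact h1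
  have hrep : ∀ z r, IntervalIntegrable (H z) MeasureTheory.volume a r →
      Dφ r a z = T r a + (T r a).comp (∫ s in a..r, H z s) := by
    intro z r hint
    rw [hDvop' z r]
    congr 1
    have he : (fun s => (T r s).comp (G z s))
        = fun s => (ContinuousLinearMap.compL ℝ (Ed d) (Ed d) (Ed d) (T r a)) (H z s) := by
      funext s
      rw [ContinuousLinearMap.compL_apply, hTH]
    rw [he, ContinuousLinearMap.intervalIntegral_comp_comm _ hint,
      ContinuousLinearMap.compL_apply]
  -- Stage 1: uniform bound on ‖Dφ t a z‖
  set C1 := CT * Real.exp K1 * Real.exp (eps * |a|) with hC1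
  have hC10 : 0 < C1 := by
    rw [hC1]; exact mul_pos (mul_pos hCT0 (Real.exp_pos _)) (Real.exp_pos _)
  have hδpos : (0 : ℝ) ≤ CT * Real.exp (eps * |a|) :=
    (mul_pos hCT0 (Real.exp_pos _)).le
  have bdd : ∀ z, ∀ t ∈ Set.Icc a b, ‖Dφ t a z‖ ≤ C1 := by
    intro z t ht
    by_cases hint : IntervalIntegrable (H z) MeasureTheory.volume a t
    · -- integrable case: Gronwall on [a, t]
      have hat : a ≤ t := ht.1
      have hintr : ∀ r, r ∈ Set.Icc a t → IntervalIntegrable (H z) MeasureTheory.volume a r := by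
        intro r hr
        refine hint.mono_set ?_
        rw [Set.uIcc_of_le hr.1, Set.uIcc_of_le hat]
        exact Set.Icc_subset_Icc le_rfl hr.2
      have hwcont : ContinuousOn (fun r => ∫ s in a..r, H z s) (Set.Icc a t) := by
        have := intervalIntegral.continuousOn_primitive_interval' hint Set.left_mem_uIcc
        rwa [Set.uIcc_of_le hat] at this
      have hucont : ContinuousOn (fun r => Dφ r a z) (Set.Icc a t) := by
        have h1 : ContinuousOn (fun r => T r a + (T r a).comp (∫ s in a..r, H z s))
            (Set.Icc a t) :=
          ((contT a).continuousOn).add (((contT a).continuousOn).clm_comp hwcont)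
        exact h1.congr fun r hr => hrep z r (hintr r hr)
      have hineq : ∀ r ∈ Set.Icc a t, ‖Dφ r a z‖ ≤
          CT * Real.exp (eps * |a|) + K1 * ∫ s in a..r, ‖Dφ s a z‖ := by
        intro r hr
        have hrIcc : r ∈ Set.Icc a b := ⟨hr.1, hr.2.trans ht.2⟩
        have har : a ≤ r := hr.1
        have hΛint : IntervalIntegrable (fun s => ‖Dφ s a z‖) MeasureTheory.volume a r := by
          apply ContinuousOn.intervalIntegrable
          rw [Set.uIcc_of_le har]
          exact (hucont.mono (Set.Icc_subset_Icc le_rfl hr.2)).norm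
        rw [hDvop' z r]
        refine (norm_add_le _ _).trans ?_
        have h2 : ‖∫ s in a..r, (T r s).comp (G z s)‖ ≤
            K1 * ∫ s in a..r, ‖Dφ s a z‖ := by
          have hae : ∀ᵐ s ∂(MeasureTheory.volume.restrict (Set.uIoc a r)),
              ‖(T r s).comp (G z s)‖ ≤ K1 * ‖Dφ s a z‖ := by
            rw [MeasureTheory.ae_restrict_iff' measurableSet_uIoc]
            refine Filter.Eventually.of_forall fun s hs => ?_
            rw [Set.uIoc_of_le har] at hs
            have hsIcc : s ∈ Set.Icc a b := ⟨hs.1.le, hs.2.trans hrIcc.2⟩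
            have hcomp1 : ‖(T r s).comp (G z s)‖ ≤ ‖T r s‖ * ‖G z s‖ :=
              ContinuousLinearMap.opNorm_comp_le _ _
            have hcomp2 : ‖G z s‖ ≤ ‖Df s (φ s a z)‖ * ‖Dφ s a z‖ :=
              ContinuousLinearMap.opNorm_comp_le _ _
            have hDfb : ‖Df s (φ s a z)‖ ≤
                η * (Real.exp (3 * eps) * Real.exp (-(3 * eps) * |a|)) :=
              (hF3 s _).trans (mul_le_mul_of_nonneg_left (hexp3 s hsIcc) hη.le)
            have step : ‖(T r s).comp (G z s)‖ ≤
                CT * Real.exp (eps * |a|) *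
                  (η * (Real.exp (3 * eps) * Real.exp (-(3 * eps) * |a|))) * ‖Dφ s a z‖ := by
              refine hcomp1.trans ?_
              calc ‖T r s‖ * ‖G z s‖
                  ≤ (CT * Real.exp (eps * |a|)) * (‖Df s (φ s a z)‖ * ‖Dφ s a z‖) :=
                    mul_le_mul (hTle r hrIcc s hsIcc) hcomp2 (norm_nonneg _) hδpos
                _ ≤ (CT * Real.exp (eps * |a|)) *
                      ((η * (Real.exp (3 * eps) * Real.exp (-(3 * eps) * |a|))) *
                        ‖Dφ s a z‖) := by
                    refine mul_le_mul_of_nonneg_left ?_ hδpos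
                    exact mul_le_mul_of_nonneg_right hDfb (norm_nonneg _)
                _ = CT * Real.exp (eps * |a|) *
                      (η * (Real.exp (3 * eps) * Real.exp (-(3 * eps) * |a|))) *
                        ‖Dφ s a z‖ := by ring
            refine step.trans ?_
            exact mul_le_mul_of_nonneg_right hKcoef (norm_nonneg _)
          have hbd := intervalIntegral.norm_integral_le_abs_of_norm_le hae (hΛint.const_mul K1)
          refine hbd.trans ?_
          rw [intervalIntegral.integral_const_mul, abs_of_nonneg
            (mul_nonneg hK10.le
              (intervalIntegral.integral_nonneg har fun s _ => norm_nonneg _))]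
        have h1 : ‖T r a‖ ≤ CT * Real.exp (eps * |a|) :=
          hTle r hrIcc a (Set.left_mem_Icc.2 hab)
        linarith
      have hΛcont : ContinuousOn (fun r => ‖Dφ r a z‖) (Set.Icc a t) := hucont.norm
      have hgr := gronwall_int' hat hΛcont (fun r _ => norm_nonneg _) hK10 hδpos hineq t
        (Set.right_mem_Icc.2 hat)
      refine hgr.trans ?_
      have h1 : Real.exp (K1 * (t - a)) ≤ Real.exp K1 := by
        apply Real.exp_le_exp.2
        have h2 := ht.2; rw [hb] at h2
        exact mul_le_of_le_one_right hK10.le (by linarith)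
      calc CT * Real.exp (eps * |a|) * Real.exp (K1 * (t - a))
          ≤ CT * Real.exp (eps * |a|) * Real.exp K1 :=
            mul_le_mul_of_nonneg_left h1 hδpos
        _ = C1 := by rw [hC1]; ring
    · -- non-integrable case: the integral vanishes
      have hzero : (∫ s in a..t, (T t s).comp (G z s)) = 0 := by
        apply intervalIntegral.integral_undef
        intro hcon
        apply hint
        have he : H z = fun s => (ContinuousLinearMap.compL ℝ (Ed d) (Ed d) (Ed d) (T a t))
            ((T t s).comp (G z s)) := by
          funext s
          rw [ContinuousLinearMap.compL_apply, ← ContinuousLinearMap.comp_assoc, hT_comp]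
        rw [he]
        exact hcon.clm_comp' _
      rw [hDvop' z t, hzero, add_zero]
      refine (hTle t ht a (Set.left_mem_Icc.2 hab)).trans ?_
      rw [hC1]
      have h1 : (1 : ℝ) ≤ Real.exp K1 := Real.one_le_exp hK10.le
      calc CT * Real.exp (eps * |a|) = CT * 1 * Real.exp (eps * |a|) := by ring
        _ ≤ CT * Real.exp K1 * Real.exp (eps * |a|) :=
            mul_le_mul_of_nonneg_right
              (mul_le_mul_of_nonneg_left h1 hCT0.le) (Real.exp_pos _).le
  -- Stage 2: integrability of H z on [a, b]
  have measG : ∀ z, Measurable (G z) := by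
    intro z
    have m1 : Measurable fun s => Df s (φ s a z) :=
      (hDf_cont.comp (continuous_id.prodMk (contφt z))).measurable
    have m2 := measDφ z
    have hcont : Continuous fun p : (Ed d →L[ℝ] Ed d) × (Ed d →L[ℝ] Ed d) => p.1.comp p.2 :=
      isBoundedBilinearMap_comp.continuous
    exact hcont.measurable.comp (m1.prodMk m2)
  have measH : ∀ z, Measurable (H z) := by
    intro z
    have hcont : Continuous fun p : (Ed d →L[ℝ] Ed d) × (Ed d →L[ℝ] Ed d) => p.1.comp p.2 :=
      isBoundedBilinearMap_comp.continuous
    exact hcont.measurable.comp (contTa.measurable.prodMk (measG z))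
  have hHbound : ∀ z, ∀ s ∈ Set.Icc a b,
      ‖H z s‖ ≤ CT * Real.exp (eps * |a|) * (η * C1) := by
    intro z s hs
    have h1 : ‖H z s‖ ≤ ‖T a s‖ * ‖G z s‖ := ContinuousLinearMap.opNorm_comp_le _ _
    have h2 : ‖G z s‖ ≤ ‖Df s (φ s a z)‖ * ‖Dφ s a z‖ := ContinuousLinearMap.opNorm_comp_le _ _
    have h3 : ‖Df s (φ s a z)‖ ≤ η := by
      refine (hF3 s _).trans ?_
      have h5 : Real.exp (-3 * eps * |s|) ≤ 1 := by
        rw [← Real.exp_zero]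
        apply Real.exp_le_exp.2
        have h0 := mul_nonneg heps (abs_nonneg s)
        linarith
      exact mul_le_of_le_one_right hη.le h5
    have h4 : ‖G z s‖ ≤ η * C1 :=
      h2.trans (mul_le_mul h3 (bdd z s hs) (norm_nonneg _) hη.le)
    refine h1.trans ?_
    exact mul_le_mul (hTle a (Set.left_mem_Icc.2 hab) s hs) h4 (norm_nonneg _) hδpos
  have intH : ∀ z, IntervalIntegrable (H z) MeasureTheory.volume a b := by
    intro z
    rw [intervalIntegrable_iff_integrableOn_Ioc_of_le hab]
    apply Integrable.mono' (g := fun _ => CT * Real.exp (eps * |a|) * (η * C1))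
      (integrableOn_const measure_Ioc_lt_top.ne)
      ((measH z).aestronglyMeasurable)
    rw [MeasureTheory.ae_restrict_iff' measurableSet_Ioc]
    exact Filter.Eventually.of_forall fun s hs => hHbound z s ⟨hs.1.le, hs.2⟩
  have intHr : ∀ z r, r ∈ Set.Icc a b → IntervalIntegrable (H z) MeasureTheory.volume a r := by
    intro z r hr
    refine (intH z).mono_set ?_
    rw [Set.uIcc_of_le hr.1, Set.uIcc_of_le hab]
    exact Set.Icc_subset_Icc le_rfl hr.2
  -- continuity of r ↦ Dφ r a z on [a, b]
  have ucontb : ∀ z, ContinuousOn (fun r => Dφ r a z) (Set.Icc a b) := by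
    intro z
    have hwcont : ContinuousOn (fun r => ∫ s in a..r, H z s) (Set.Icc a b) := by
      have := intervalIntegral.continuousOn_primitive_interval' (intH z) Set.left_mem_uIcc
      rwa [Set.uIcc_of_le hab] at this
    have h1 : ContinuousOn (fun r => T r a + (T r a).comp (∫ s in a..r, H z s))
        (Set.Icc a b) :=
      ((contT a).continuousOn).add (((contT a).continuousOn).clm_comp hwcont)
    exact h1.congr fun r hr => hrep z r (intHr z r hr)
  -- Stage 3: Lipschitz bound for φ in the initial condition
  have hφlip : ∀ s ∈ Set.Icc a b, ‖φ s a x - φ s a y‖ ≤ C1 * ‖x - y‖ := by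
    intro s hs
    have := Convex.norm_image_sub_le_of_norm_hasFDerivWithin_le
      (fun z _ => (hφ_diff s a z).hasFDerivWithinAt)
      (fun z _ => bdd z s hs) convex_univ (Set.mem_univ y) (Set.mem_univ x)
    simpa using this
  -- Stage 4: Gronwall for the difference of derivatives
  set δ2 := (CT * Real.exp (eps * |a|)) *
      (B * (Real.exp (4 * eps) * Real.exp (-(4 * eps) * |a|)) * (C1 * ‖x - y‖) * C1) with hδ2
  have hδ20 : 0 ≤ δ2 := by
    rw [hδ2]
    apply mul_nonneg hδpos
    apply mul_nonneg (mul_nonneg (mul_nonneg hB.le (by positivity))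
      (mul_nonneg hC10.le (norm_nonneg _))) hC10.le
  have hΔcont : ContinuousOn (fun r => ‖Dφ r a x - Dφ r a y‖) (Set.Icc a b) :=
    ((ucontb x).sub (ucontb y)).norm
  have hΔineq : ∀ r ∈ Set.Icc a b, ‖Dφ r a x - Dφ r a y‖ ≤
      δ2 + K1 * ∫ s in a..r, ‖Dφ s a x - Dφ s a y‖ := by
    intro r hr
    have har : a ≤ r := hr.1
    have hintx := hGint x r (intHr x r hr)
    have hinty := hGint y r (intHr y r hr)
    have hdiff : Dφ r a x - Dφ r a y =
        ∫ s in a..r, ((T r s).comp (G x s) - (T r s).comp (G y s)) := by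
      rw [hDvop' x r, hDvop' y r, intervalIntegral.integral_sub hintx hinty]
      abel
    rw [hdiff]
    have hΔint : IntervalIntegrable (fun s => ‖Dφ s a x - Dφ s a y‖) MeasureTheory.volume a r := by
      apply ContinuousOn.intervalIntegrable
      rw [Set.uIcc_of_le har]
      exact hΔcont.mono (Set.Icc_subset_Icc le_rfl hr.2)
    have hdom : IntervalIntegrable (fun s => δ2 + K1 * ‖Dφ s a x - Dφ s a y‖)
        MeasureTheory.volume a r :=
      (intervalIntegrable_const).add (hΔint.const_mul K1)
    have hae : ∀ᵐ s ∂(MeasureTheory.volume.restrict (Set.uIoc a r)),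
        ‖(T r s).comp (G x s) - (T r s).comp (G y s)‖ ≤
          δ2 + K1 * ‖Dφ s a x - Dφ s a y‖ := by
      rw [MeasureTheory.ae_restrict_iff' measurableSet_uIoc]
      refine Filter.Eventually.of_forall fun s hs => ?_
      rw [Set.uIoc_of_le har] at hs
      have hsIcc : s ∈ Set.Icc a b := ⟨hs.1.le, hs.2.trans hr.2⟩
      have e1 : (T r s).comp (G x s) - (T r s).comp (G y s) = (T r s).comp (G x s - G y s) :=
        (ContinuousLinearMap.comp_sub _ _ _).symm
      have e2 : G x s - G y s =
          (Df s (φ s a x) - Df s (φ s a y)).comp (Dφ s a x)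
            + (Df s (φ s a y)).comp (Dφ s a x - Dφ s a y) := by
        show (Df s (φ s a x)).comp (Dφ s a x) - (Df s (φ s a y)).comp (Dφ s a y) = _
        rw [ContinuousLinearMap.sub_comp, ContinuousLinearMap.comp_sub]
        abel
      have hn1nn : (0 : ℝ) ≤ B * (Real.exp (4 * eps) * Real.exp (-(4 * eps) * |a|)) *
          (C1 * ‖x - y‖) :=
        mul_nonneg (mul_nonneg hB.le (by positivity)) (mul_nonneg hC10.le (norm_nonneg _))
      have n1 : ‖(Df s (φ s a x) - Df s (φ s a y)).comp (Dφ s a x)‖ ≤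
          B * (Real.exp (4 * eps) * Real.exp (-(4 * eps) * |a|)) * (C1 * ‖x - y‖) * C1 := by
        refine (ContinuousLinearMap.opNorm_comp_le _ _).trans ?_
        have hfd : ‖Df s (φ s a x) - Df s (φ s a y)‖ ≤
            B * (Real.exp (4 * eps) * Real.exp (-(4 * eps) * |a|)) * (C1 * ‖x - y‖) := by
          refine (hF4 s _ _).trans ?_
          exact mul_le_mul (mul_le_mul_of_nonneg_left (hexp4 s hsIcc) hB.le)
            (hφlip s hsIcc) (norm_nonneg _) (mul_nonneg hB.le (by positivity))
        exact mul_le_mul hfd (bdd x s hsIcc) (norm_nonneg _) hn1nn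
      have n2 : ‖(Df s (φ s a y)).comp (Dφ s a x - Dφ s a y)‖ ≤
          η * (Real.exp (3 * eps) * Real.exp (-(3 * eps) * |a|)) *
            ‖Dφ s a x - Dφ s a y‖ := by
        refine (ContinuousLinearMap.opNorm_comp_le _ _).trans ?_
        apply mul_le_mul _ le_rfl (norm_nonneg _) (mul_nonneg hη.le (by positivity))
        exact (hF3 s _).trans (mul_le_mul_of_nonneg_left (hexp3 s hsIcc) hη.le)
      have nT : ‖T r s‖ ≤ CT * Real.exp (eps * |a|) := hTle r hr s hsIcc
      have hGb : ‖G x s - G y s‖ ≤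
          B * (Real.exp (4 * eps) * Real.exp (-(4 * eps) * |a|)) * (C1 * ‖x - y‖) * C1
            + η * (Real.exp (3 * eps) * Real.exp (-(3 * eps) * |a|)) *
              ‖Dφ s a x - Dφ s a y‖ := by
        rw [e2]
        exact (norm_add_le _ _).trans (add_le_add n1 n2)
      calc ‖(T r s).comp (G x s) - (T r s).comp (G y s)‖
          = ‖(T r s).comp (G x s - G y s)‖ := by rw [e1]
        _ ≤ ‖T r s‖ * ‖G x s - G y s‖ := ContinuousLinearMap.opNorm_comp_le _ _
        _ ≤ (CT * Real.exp (eps * |a|)) *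
            (B * (Real.exp (4 * eps) * Real.exp (-(4 * eps) * |a|)) * (C1 * ‖x - y‖) * C1
              + η * (Real.exp (3 * eps) * Real.exp (-(3 * eps) * |a|)) *
                ‖Dφ s a x - Dφ s a y‖) :=
            mul_le_mul nT hGb (norm_nonneg _) hδpos
        _ ≤ δ2 + K1 * ‖Dφ s a x - Dφ s a y‖ := by
            have hsplit : (CT * Real.exp (eps * |a|)) *
                (B * (Real.exp (4 * eps) * Real.exp (-(4 * eps) * |a|)) * (C1 * ‖x - y‖) * C1
                  + η * (Real.exp (3 * eps) * Real.exp (-(3 * eps) * |a|)) *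
                    ‖Dφ s a x - Dφ s a y‖)
                = δ2 + (CT * Real.exp (eps * |a|) *
                    (η * (Real.exp (3 * eps) * Real.exp (-(3 * eps) * |a|)))) *
                      ‖Dφ s a x - Dφ s a y‖ := by
              rw [hδ2]; ring
            rw [hsplit]
            have hlast := mul_le_mul_of_nonneg_right hKcoef
              (norm_nonneg (Dφ s a x - Dφ s a y))
            linarith
    have hbd := intervalIntegral.norm_integral_le_abs_of_norm_le hae hdom
    · refine hbd.trans ?_
      have hnn : 0 ≤ ∫ s in a..r, (δ2 + K1 * ‖Dφ s a x - Dφ s a y‖) := by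
        apply intervalIntegral.integral_nonneg har
        intro s _
        exact add_nonneg hδ20 (mul_nonneg hK10.le (norm_nonneg _))
      rw [abs_of_nonneg hnn, intervalIntegral.integral_add intervalIntegrable_const
        (hΔint.const_mul K1), intervalIntegral.integral_const,
        intervalIntegral.integral_const_mul]
      have hr1 : r - a ≤ 1 := by
        have h2 := hr.2; rw [hb] at h2; linarith
      have hsm : (r - a) • δ2 ≤ δ2 := by
        rw [smul_eq_mul]
        exact mul_le_of_le_one_left hδ20 hr1
      linarith
  have hfin := gronwall_int' hab hΔcont (fun r _ => norm_nonneg _) hK10 hδ20 hΔineq b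
    (Set.right_mem_Icc.2 hab)
  have hba : b - a = 1 := by rw [hb]; ring
  rw [hba, mul_one] at hfin
  refine hfin.trans (le_of_eq ?_)
  have c1 : Real.exp (eps * |a|) * Real.exp (eps * |a|) * Real.exp (eps * |a|) *
      Real.exp (-(4 * eps) * |a|) = Real.exp (-eps * |a|) := by
    rw [← Real.exp_add, ← Real.exp_add, ← Real.exp_add]
    ring_nf
  have c2 : Real.exp (4 * eps) * Real.exp K1 * Real.exp K1 * Real.exp K1 =
      Real.exp (4 * eps + 3 * K1) := by
    rw [← Real.exp_add, ← Real.exp_add, ← Real.exp_add]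
    ring_nf
  calc δ2 * Real.exp K1
      = B * CT ^ 3 * (Real.exp (4 * eps) * Real.exp K1 * Real.exp K1 * Real.exp K1) *
          (Real.exp (eps * |a|) * Real.exp (eps * |a|) * Real.exp (eps * |a|) *
            Real.exp (-(4 * eps) * |a|)) * ‖x - y‖ := by
        rw [hδ2, hC1]; ring
    _ = B * CT ^ 3 * Real.exp (4 * eps + 3 * K1) * Real.exp (-eps * |a|) * ‖x - y‖ := by
        rw [c1, c2]


end
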